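/- arXiv:1511.04739 — 3 statements merged into one kernel-verified Lean document; each statement's English description precedes it below -/
import Mathlib

section
/- Suppose a sequence ((X_n, Y_n)) of ℤ²-valued random variables satisfies a local limit theorem with parameters (μ_X(n), μ_Y(n)) and (σ_X²(n), σ_Y²(n)), where σ_X(n), σ_Y(n) > 0. Suppose for each n the ℤ²-valued random pair (A_n, B_n) is defined on the same probability space, is independent of (X_n, Y_n), has finite second moments, and satisfies Var[A_n] = o(σ_X²(n)) and Var[B_n] = o(σ_Y²(n)) as n → ∞. Then ((A_n + X_n, B_n + Y_n)) satisfies a local limit theorem with parameters (E[A_n] + μ_X(n), E[B_n] + μ_Y(n)) and (σ_X²(n), σ_Y²(n)). -/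
open MeasureTheory ProbabilityTheory Filter

/-- The bivariate discrete Gaussian comparison function. -/
noncomputable def gauss2 (μX μY σX σY : ℝ) (x y : ℤ) : ℝ :=
  (1 / (2 * Real.pi * σX * σY)) *
    Real.exp (-((x : ℝ) - μX) ^ 2 / (2 * σX ^ 2) - ((y : ℝ) - μY) ^ 2 / (2 * σY ^ 2))

/-- A sequence `((X_n, Y_n))` of `ℤ²`-valued random variables satisfies a local limit
theorem with parameters `(μX, μY)` and `(σX², σY²)` if
`sup_{(x,y) ∈ ℤ²} |Pr(X_n = x, Y_n = y) − gauss2(...)| = o(1/(σX·σY))`. -/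
def SatisfiesLLT {Ω : ℕ → Type*} [∀ n, MeasurableSpace (Ω n)]
    (μ : ∀ n, Measure (Ω n)) (X Y : ∀ n, Ω n → ℤ)
    (μX μY σX σY : ℕ → ℝ) : Prop :=
  (fun n => ⨆ xy : ℤ × ℤ,
      |(μ n {ω | X n ω = xy.1 ∧ Y n ω = xy.2}).toReal
        - gauss2 (μX n) (μY n) (σX n) (σY n) xy.1 xy.2|)
    =o[atTop] (fun n => 1 / (σX n * σY n))


section aux
set_option linter.unusedSectionVars false
open Real


lemma xexp_le (u : ℝ) (hu : 0 ≤ u) : u * Real.exp (-u^2/2) ≤ 1 := by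
  have h1 : u ≤ Real.exp (u^2/2) := by
    have := Real.add_one_le_exp (u^2/2)
    nlinarith
  have h2 : Real.exp (-u^2/2) * Real.exp (u^2/2) = 1 := by
    rw [← Real.exp_add]; ring_nf; exact Real.exp_zero
  nlinarith [Real.exp_pos (-u^2/2), Real.exp_pos (u^2/2)]

lemma gaussLip {σ : ℝ} (hσ : 0 < σ) (s t : ℝ) :
    |Real.exp (-s^2/(2*σ^2)) - Real.exp (-t^2/(2*σ^2))| ≤ |s - t| / σ := by
  have hder : ∀ x : ℝ, HasDerivAt (fun u => Real.exp (-u^2/(2*σ^2)))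
      (Real.exp (-x^2/(2*σ^2)) * (-(2*x)/(2*σ^2))) x := by
    intro x
    have h1 : HasDerivAt (fun u : ℝ => -u^2/(2*σ^2)) (-(2*x)/(2*σ^2)) x := by
      have := ((hasDerivAt_pow 2 x).neg).div_const (2*σ^2)
      simpa using this
    simpa using h1.exp
  have hbound : ∀ x : ℝ, ‖Real.exp (-x^2/(2*σ^2)) * (-(2*x)/(2*σ^2))‖ ≤ 1/σ := by
    intro x
    have hx := xexp_le (|x|/σ) (by positivity)
    have hσ2 : (0:ℝ) < σ^2 := by positivity
    have hexp : Real.exp (-(|x|/σ)^2/2) = Real.exp (-x^2/(2*σ^2)) := by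
      congr 1
      rw [div_pow, sq_abs]
      field_simp
    rw [hexp] at hx
    rw [Real.norm_eq_abs, abs_mul, abs_of_pos (Real.exp_pos _)]
    have h3 : |(-(2*x)/(2*σ^2))| = |x|/σ^2 := by
      rw [abs_div, abs_neg, abs_mul]
      rw [abs_of_pos (show (0:ℝ)<2 by norm_num), abs_of_pos (by positivity : (0:ℝ) < 2*σ^2)]
      field_simp
    rw [h3]
    have hx' : |x| * Real.exp (-x^2/(2*σ^2)) ≤ σ := by
      rw [div_mul_eq_mul_div, div_le_one hσ] at hx
      linarith
    calc Real.exp (-x^2/(2*σ^2)) * (|x|/σ^2) = (|x| * Real.exp (-x^2/(2*σ^2)))/σ^2 := by ring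
      _ ≤ σ/σ^2 := by gcongr
      _ = 1/σ := by rw [sq]; field_simp
  have key := Convex.norm_image_sub_le_of_norm_deriv_le
    (f := fun u => Real.exp (-u^2/(2*σ^2))) (s := Set.univ)
    (fun x _ => (hder x).differentiableAt)
    (fun x _ => by rw [(hder x).deriv]; exact hbound x)
    convex_univ (Set.mem_univ t) (Set.mem_univ s)
  calc |Real.exp (-s^2/(2*σ^2)) - Real.exp (-t^2/(2*σ^2))| ≤ 1/σ * ‖s - t‖ := key
    _ = |s - t|/σ := by rw [Real.norm_eq_abs]; ring

lemma abs_integral_le_sqrt {Ω : Type*} [MeasurableSpace Ω] (μ : Measure Ω)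
    [IsProbabilityMeasure μ] (Z : Ω → ℝ) (hZm : AEStronglyMeasurable Z μ)
    (hZ2 : Integrable (fun ω => Z ω ^ 2) μ) :
    ∫ ω, |Z ω| ∂μ ≤ Real.sqrt (∫ ω, Z ω ^ 2 ∂μ) := by
  have hI2 : (0:ℝ) ≤ ∫ ω, Z ω ^ 2 ∂μ := integral_nonneg fun ω => sq_nonneg _
  set s := Real.sqrt (∫ ω, Z ω ^ 2 ∂μ) with hs
  have hsq : s ^ 2 = ∫ ω, Z ω ^ 2 ∂μ := Real.sq_sqrt hI2
  have hintabs : Integrable (fun ω => |Z ω|) μ := by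
    refine (hZ2.add (integrable_const 1)).mono' hZm.norm ?_
    filter_upwards with ω
    rw [Real.norm_eq_abs, abs_abs]
    simp only [Pi.add_apply]
    nlinarith [abs_nonneg (Z ω), sq_abs (Z ω), sq_nonneg (|Z ω| - 1)]
  refine le_of_forall_pos_le_add fun ε hε => ?_
  have hs0 : 0 ≤ s := Real.sqrt_nonneg _
  have hc : 0 < s + ε := by linarith
  have hpt : ∀ ω, |Z ω| ≤ (Z ω ^ 2 / (s + ε) + (s + ε)) / 2 := by
    intro ω
    rw [div_add' _ _ _ hc.ne', le_div_iff₀ (by norm_num : (0:ℝ) < 2), le_div_iff₀ hc]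
    nlinarith [sq_nonneg (|Z ω| - (s + ε)), sq_abs (Z ω)]
  calc ∫ ω, |Z ω| ∂μ ≤ ∫ ω, (Z ω ^ 2 / (s + ε) + (s + ε)) / 2 ∂μ := by
        exact integral_mono hintabs (((hZ2.div_const _).add (integrable_const _)).div_const _) hpt
    _ = ((∫ ω, Z ω ^ 2 ∂μ) / (s + ε) + (s + ε)) / 2 := by
        rw [integral_div, integral_add (hZ2.div_const _) (integrable_const _),
          integral_div, integral_const]
        simp
    _ ≤ s + ε := by
        rw [← hsq, div_le_iff₀ (by norm_num : (0:ℝ) < 2), div_add' _ _ _ hc.ne',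
          div_le_iff₀ hc]
        nlinarith

lemma int_abs_sub_le_sqrt_variance {Ω : Type*} [MeasurableSpace Ω] (μ : Measure Ω)
    [IsProbabilityMeasure μ] (A : Ω → ℤ) (hmA : Measurable A)
    (hA2 : Integrable (fun ω => ((A ω : ℝ)) ^ 2) μ) :
    ∫ ω, |(A ω : ℝ) - ∫ ω', (A ω' : ℝ) ∂μ| ∂μ
      ≤ Real.sqrt (variance (fun ω => (A ω : ℝ)) μ) := by
  have hmA' : Measurable (fun ω => (A ω : ℝ)) := Measurable.comp (by exact measurable_of_countable _) hmA
  have hmem : MemLp (fun ω => (A ω : ℝ)) 2 μ :=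
    (memLp_two_iff_integrable_sq hmA'.aestronglyMeasurable).mpr hA2
  set m := ∫ ω', (A ω' : ℝ) ∂μ
  have hZ2 : Integrable (fun ω => ((A ω : ℝ) - m) ^ 2) μ := by
    have := (hmem.sub (memLp_const m))
    exact (memLp_two_iff_integrable_sq (this.aestronglyMeasurable)).mp this
  have hvar : variance (fun ω => (A ω : ℝ)) μ = ∫ ω, ((A ω : ℝ) - m) ^ 2 ∂μ := by
    rw [variance_eq_integral hmA'.aemeasurable]
  rw [hvar]
  exact abs_integral_le_sqrt μ _ ((hmA'.sub measurable_const).aestronglyMeasurable) hZ2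

section decomp
variable {Ω : Type*} [MeasurableSpace Ω] (μ : Measure Ω) [IsProbabilityMeasure μ]
  (X Y A B : Ω → ℤ)

lemma set_eq (p : ℤ × ℤ) :
    {ω | A ω = p.1 ∧ B ω = p.2} = (fun ω => (A ω, B ω)) ⁻¹' {p} := by
  ext ω; simp [Prod.ext_iff]

lemma decomp (hmX : Measurable X) (hmY : Measurable Y) (hmA : Measurable A)
    (hmB : Measurable B)
    (hindep : IndepFun (fun ω => (A ω, B ω)) (fun ω => (X ω, Y ω)) μ) (x y : ℤ) :
    μ {ω | A ω + X ω = x ∧ B ω + Y ω = y}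
      = ∑' p : ℤ × ℤ, μ {ω | A ω = p.1 ∧ B ω = p.2}
          * μ {ω | X ω = x - p.1 ∧ Y ω = y - p.2} := by
  have hE : ∀ p : ℤ × ℤ, MeasurableSet ((fun ω => (A ω, B ω)) ⁻¹' {p}) :=
    fun p => (hmA.prodMk hmB) (measurableSet_singleton p)
  have hF : ∀ q : ℤ × ℤ, MeasurableSet ((fun ω => (X ω, Y ω)) ⁻¹' {q}) :=
    fun q => (hmX.prodMk hmY) (measurableSet_singleton q)
  have hset : {ω | A ω + X ω = x ∧ B ω + Y ω = y}
      = ⋃ p : ℤ × ℤ, ((fun ω => (A ω, B ω)) ⁻¹' {p}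
          ∩ (fun ω => (X ω, Y ω)) ⁻¹' {(x - p.1, y - p.2)}) := by
    ext ω
    simp only [Set.mem_setOf_eq, Set.mem_iUnion, Set.mem_inter_iff, Set.mem_preimage,
      Set.mem_singleton_iff, Prod.ext_iff]
    constructor
    · rintro ⟨h1, h2⟩
      exact ⟨(A ω, B ω), ⟨rfl, rfl⟩, by omega, by omega⟩
    · rintro ⟨p, ⟨ha, hb⟩, hx', hy'⟩
      omega
  rw [hset, measure_iUnion ?_ (fun p => (hE p).inter (hF _))]
  · congr 1
    ext p
    rw [hindep.measure_inter_preimage_eq_mul _ _ (measurableSet_singleton _)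
      (measurableSet_singleton _)]
    rw [set_eq A B p, set_eq X Y (x - p.1, y - p.2)]
  · intro p q hpq
    simp only [Function.onFun]
    rw [Set.disjoint_left]
    rintro ω ⟨h1, _⟩ ⟨h2, _⟩
    simp only [Set.mem_preimage, Set.mem_singleton_iff] at h1 h2
    exact hpq (h1 ▸ h2 ▸ rfl)

lemma decomp_univ : (Set.univ : Set Ω) = ⋃ p : ℤ × ℤ, (fun ω => (A ω, B ω)) ⁻¹' {p} := by
  ext ω
  simp only [Set.mem_univ, Set.mem_iUnion, Set.mem_preimage, Set.mem_singleton_iff, true_iff]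
  exact ⟨(A ω, B ω), rfl⟩

lemma q_tsum (hmA : Measurable A) (hmB : Measurable B) :
    ∑' p : ℤ × ℤ, μ {ω | A ω = p.1 ∧ B ω = p.2} = 1 := by
  have := measure_iUnion (μ := μ) (f := fun p : ℤ × ℤ => (fun ω => (A ω, B ω)) ⁻¹' {p}) ?_
    (fun p => (hmA.prodMk hmB) (measurableSet_singleton p))
  · rw [← decomp_univ A B] at this
    rw [measure_univ] at this
    have h2 : ∑' p : ℤ × ℤ, μ {ω | A ω = p.1 ∧ B ω = p.2}
        = ∑' p : ℤ × ℤ, μ ((fun ω => (A ω, B ω)) ⁻¹' {p}) :=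
      tsum_congr fun p => by rw [set_eq A B p]
    rw [h2]
    exact this.symm
  · intro p q hpq
    simp only [Function.onFun]
    rw [Set.disjoint_left]
    rintro ω h1 h2
    simp only [Set.mem_preimage, Set.mem_singleton_iff] at h1 h2
    exact hpq (h1 ▸ h2 ▸ rfl)

end decomp

section mapstuff
variable {Ω : Type*} [MeasurableSpace Ω] (μ : Measure Ω) [IsProbabilityMeasure μ]
  (A B : Ω → ℤ)

lemma tsum_q_eq_integral (hmA : Measurable A) (hmB : Measurable B) (g : ℤ × ℤ → ℝ)
    (hi : Integrable (fun ω => g (A ω, B ω)) μ) :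
    ∑' p : ℤ × ℤ, (μ {ω | A ω = p.1 ∧ B ω = p.2}).toReal * g p
      = ∫ ω, g (A ω, B ω) ∂μ := by
  have hmp : Measurable (fun ω => (A ω, B ω)) := hmA.prodMk hmB
  set ν := Measure.map (fun ω => (A ω, B ω)) μ with hν
  have hgm : Measurable g := measurable_of_countable _
  have hiν : Integrable g ν := by
    rw [hν, integrable_map_measure hgm.aestronglyMeasurable hmp.aemeasurable]
    exact hi
  have h1 : ∫ ω, g (A ω, B ω) ∂μ = ∫ z, g z ∂ν := by
    rw [hν, integral_map hmp.aemeasurable hgm.aestronglyMeasurable]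
  rw [h1, integral_countable' hiν]
  apply tsum_congr
  intro p
  rw [hν, measureReal_def, Measure.map_apply hmp (measurableSet_singleton p)]
  have : (fun ω => (A ω, B ω)) ⁻¹' {p} = {ω | A ω = p.1 ∧ B ω = p.2} := by
    ext ω; simp [Prod.ext_iff]
  rw [this, smul_eq_mul]

lemma summable_q_mul (hmA : Measurable A) (hmB : Measurable B) (g : ℤ × ℤ → ℝ)
    (hi : Integrable (fun ω => g (A ω, B ω)) μ) :
    Summable (fun p : ℤ × ℤ => (μ {ω | A ω = p.1 ∧ B ω = p.2}).toReal * ‖g p‖) := by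
  have hmp : Measurable (fun ω => (A ω, B ω)) := hmA.prodMk hmB
  set ν := Measure.map (fun ω => (A ω, B ω)) μ with hν
  have hgm : Measurable g := measurable_of_countable _
  have hiν : Integrable g ν := by
    rw [hν, integrable_map_measure hgm.aestronglyMeasurable hmp.aemeasurable]
    exact hi
  have hfin := hiν.hasFiniteIntegral
  rw [HasFiniteIntegral, lintegral_countable'] at hfin
  have hsum : Summable (fun p : ℤ × ℤ => (((‖g p‖₊ : ENNReal) * ν {p})).toReal) :=
    ENNReal.summable_toReal hfin.ne
  apply hsum.congr
  intro p
  rw [ENNReal.toReal_mul]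
  rw [hν, Measure.map_apply hmp (measurableSet_singleton p)]
  have : (fun ω => (A ω, B ω)) ⁻¹' {p} = {ω | A ω = p.1 ∧ B ω = p.2} := by
    ext ω; simp [Prod.ext_iff]
  rw [this]
  simp [mul_comm]

end mapstuff

lemma gauss2_eq (μX μY σX σY : ℝ) (x y : ℤ) :
    gauss2 μX μY σX σY x y = (1 / (2 * Real.pi * σX * σY)) *
      (Real.exp (-((x : ℝ) - μX) ^ 2 / (2 * σX ^ 2)) *
       Real.exp (-((y : ℝ) - μY) ^ 2 / (2 * σY ^ 2))) := by
  rw [gauss2, ← Real.exp_add]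
  congr 1
  ring

lemma exp_term_le_one (m σ : ℝ) (hσ : 0 < σ) (t : ℝ) :
    Real.exp (-(t - m) ^ 2 / (2 * σ ^ 2)) ≤ 1 := by
  rw [show (1:ℝ) = Real.exp 0 by rw [Real.exp_zero]]
  apply Real.exp_le_exp.mpr
  apply div_nonpos_of_nonpos_of_nonneg
  · simp [sq_nonneg]
  · positivity

lemma gauss2_lip {μX μY σX σY : ℝ} (hσX : 0 < σX) (hσY : 0 < σY)
    (mA mB : ℝ) (x y : ℤ) (p : ℤ × ℤ) :
    |gauss2 μX μY σX σY (x - p.1) (y - p.2) - gauss2 (mA + μX) (mB + μY) σX σY x y|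
      ≤ (1 / (2 * Real.pi * σX * σY)) *
        (|(p.1 : ℝ) - mA| / σX + |(p.2 : ℝ) - mB| / σY) := by
  have hπ := Real.pi_pos
  set c := 1 / (2 * Real.pi * σX * σY) with hc
  have hc0 : 0 < c := by positivity
  rw [gauss2_eq, gauss2_eq]
  set u : ℝ := ((x - p.1 : ℤ) : ℝ) - μX
  set v : ℝ := ((y - p.2 : ℤ) : ℝ) - μY
  set u' : ℝ := (x : ℝ) - (mA + μX)
  set v' : ℝ := (y : ℝ) - (mB + μY)
  set e1 := Real.exp (-u ^ 2 / (2 * σX ^ 2))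
  set e2 := Real.exp (-v ^ 2 / (2 * σY ^ 2))
  set e1' := Real.exp (-u' ^ 2 / (2 * σX ^ 2))
  set e2' := Real.exp (-v' ^ 2 / (2 * σY ^ 2))
  have he1 : |e1 - e1'| ≤ |u - u'| / σX := gaussLip hσX u u'
  have he2 : |e2 - e2'| ≤ |v - v'| / σY := gaussLip hσY v v'
  have he2le : e2 ≤ 1 := exp_term_le_one μY σY hσY ((y - p.2 : ℤ) : ℝ)
  have he1'le : e1' ≤ 1 := exp_term_le_one (mA + μX) σX hσX (x : ℝ)
  have he2pos : 0 < e2 := Real.exp_pos _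
  have he1'pos : 0 < e1' := Real.exp_pos _
  have huu' : |u - u'| = |(p.1 : ℝ) - mA| := by
    have : u - u' = -((p.1 : ℝ) - mA) := by
      simp only [u, u']
      push_cast
      ring
    rw [this, abs_neg]
  have hvv' : |v - v'| = |(p.2 : ℝ) - mB| := by
    have : v - v' = -((p.2 : ℝ) - mB) := by
      simp only [v, v']
      push_cast
      ring
    rw [this, abs_neg]
  have hkey : |e1 * e2 - e1' * e2'| ≤ |(p.1 : ℝ) - mA| / σX + |(p.2 : ℝ) - mB| / σY := by
    have : e1 * e2 - e1' * e2' = (e1 - e1') * e2 + e1' * (e2 - e2') := by ring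
    rw [this]
    calc |(e1 - e1') * e2 + e1' * (e2 - e2')|
        ≤ |(e1 - e1') * e2| + |e1' * (e2 - e2')| := abs_add_le _ _
      _ = |e1 - e1'| * e2 + e1' * |e2 - e2'| := by
          rw [abs_mul, abs_mul, abs_of_pos he2pos, abs_of_pos he1'pos]
      _ ≤ (|u - u'| / σX) * 1 + 1 * (|v - v'| / σY) := by
          apply add_le_add
          · apply mul_le_mul he1 he2le he2pos.le (by positivity)
          · apply mul_le_mul he1'le he2 (abs_nonneg _) (by norm_num)
      _ = |(p.1 : ℝ) - mA| / σX + |(p.2 : ℝ) - mB| / σY := by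
          rw [huu', hvv']; ring
  calc |c * (e1 * e2) - c * (e1' * e2')| = c * |e1 * e2 - e1' * e2'| := by
        rw [← mul_sub, abs_mul, abs_of_pos hc0]
    _ ≤ c * (|(p.1 : ℝ) - mA| / σX + |(p.2 : ℝ) - mB| / σY) := by
        exact mul_le_mul_of_nonneg_left hkey hc0.le

lemma gauss2_bounds {μX μY σX σY : ℝ} (hσX : 0 < σX) (hσY : 0 < σY) (x y : ℤ) :
    0 ≤ gauss2 μX μY σX σY x y ∧ gauss2 μX μY σX σY x y ≤ 1 / (2 * Real.pi * σX * σY) := by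
  have hπ := Real.pi_pos
  rw [gauss2_eq]
  constructor
  · positivity
  · have h1 := exp_term_le_one μX σX hσX (x : ℝ)
    have h2 := exp_term_le_one μY σY hσY (y : ℝ)
    have e1p := Real.exp_pos (-((x : ℝ) - μX) ^ 2 / (2 * σX ^ 2))
    have e2p := Real.exp_pos (-((y : ℝ) - μY) ^ 2 / (2 * σY ^ 2))
    have h12 : Real.exp (-((x : ℝ) - μX) ^ 2 / (2 * σX ^ 2))
        * Real.exp (-((y : ℝ) - μY) ^ 2 / (2 * σY ^ 2)) ≤ 1 := by nlinarith
    have hcpos : (0:ℝ) < 1 / (2 * Real.pi * σX * σY) := by positivity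
    nlinarith

lemma pointwise_bound {Ω : Type*} [MeasurableSpace Ω] (μ : Measure Ω)
    [IsProbabilityMeasure μ] (X Y A B : Ω → ℤ) (μX μY σX σY : ℝ)
    (hσX : 0 < σX) (hσY : 0 < σY)
    (hmX : Measurable X) (hmY : Measurable Y) (hmA : Measurable A) (hmB : Measurable B)
    (hindep : IndepFun (fun ω => (A ω, B ω)) (fun ω => (X ω, Y ω)) μ)
    (intA : Integrable (fun ω => ((A ω : ℝ))) μ)
    (intB : Integrable (fun ω => ((B ω : ℝ))) μ)
    (E : ℝ)
    (hE : ∀ u v : ℤ, |(μ {ω | X ω = u ∧ Y ω = v}).toReal - gauss2 μX μY σX σY u v| ≤ E)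
    (x y : ℤ) :
    |(μ {ω | A ω + X ω = x ∧ B ω + Y ω = y}).toReal
        - gauss2 ((∫ ω, (A ω : ℝ) ∂μ) + μX) ((∫ ω, (B ω : ℝ) ∂μ) + μY) σX σY x y|
      ≤ E + (1 / (2 * Real.pi * σX * σY)) *
          ((∫ ω, |(A ω : ℝ) - ∫ ω', (A ω' : ℝ) ∂μ| ∂μ) / σX
            + (∫ ω, |(B ω : ℝ) - ∫ ω', (B ω' : ℝ) ∂μ| ∂μ) / σY) := by
  have hπ := Real.pi_pos
  set mA := ∫ ω, (A ω : ℝ) ∂μ with hmAdef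
  set mB := ∫ ω, (B ω : ℝ) ∂μ with hmBdef
  set c := 1 / (2 * Real.pi * σX * σY) with hcdef
  have hc0 : 0 < c := by positivity
  set q : ℤ × ℤ → ℝ := fun p => (μ {ω | A ω = p.1 ∧ B ω = p.2}).toReal with hqdef
  set rr : ℤ × ℤ → ℝ := fun p => (μ {ω | X ω = x - p.1 ∧ Y ω = y - p.2}).toReal with hrdef
  set gp : ℤ × ℤ → ℝ := fun p => gauss2 μX μY σX σY (x - p.1) (y - p.2) with hgpdef
  set G := gauss2 (mA + μX) (mB + μY) σX σY x y with hGdef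
  have hq0 : ∀ p, 0 ≤ q p := fun p => ENNReal.toReal_nonneg
  have hq1 : ∑' p, q p = 1 := by
    have h := q_tsum μ A B hmA hmB
    have h2 : (∑' p : ℤ × ℤ, μ {ω | A ω = p.1 ∧ B ω = p.2}).toReal
        = ∑' p : ℤ × ℤ, q p := ENNReal.tsum_toReal_eq fun p => measure_ne_top μ _
    rw [h] at h2
    simpa using h2.symm
  have S2 : Summable q := by
    apply ENNReal.summable_toReal
    rw [q_tsum μ A B hmA hmB]
    exact ENNReal.one_ne_top
  have hdecomp := decomp μ X Y A B hmX hmY hmA hmB hindep x y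
  have hstepA : (μ {ω | A ω + X ω = x ∧ B ω + Y ω = y}).toReal = ∑' p, q p * rr p := by
    rw [hdecomp, ENNReal.tsum_toReal_eq
      (fun p => ENNReal.mul_ne_top (measure_ne_top μ _) (measure_ne_top μ _))]
    exact tsum_congr fun p => ENNReal.toReal_mul
  have S1 : Summable (fun p => q p * rr p) := by
    have hne : ∑' p : ℤ × ℤ, μ {ω | A ω = p.1 ∧ B ω = p.2}
        * μ {ω | X ω = x - p.1 ∧ Y ω = y - p.2} ≠ ⊤ := by
      rw [← hdecomp]; exact measure_ne_top μ _
    exact (ENNReal.summable_toReal hne).congr fun p => ENNReal.toReal_mul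
  have S3 : Summable (fun p => q p * gp p) := by
    apply Summable.of_nonneg_of_le
      (fun p => mul_nonneg (hq0 p) (gauss2_bounds hσX hσY _ _).1)
      (fun p => mul_le_mul_of_nonneg_left (gauss2_bounds hσX hσY _ _).2 (hq0 p))
    exact S2.mul_right c
  set g0 : ℤ × ℤ → ℝ := fun p => c * (|(p.1 : ℝ) - mA| / σX + |(p.2 : ℝ) - mB| / σY)
    with hg0def
  have hint1 : Integrable (fun ω => |(A ω : ℝ) - mA| / σX) μ :=
    ((intA.sub (integrable_const mA)).abs).div_const σX
  have hint2 : Integrable (fun ω => |(B ω : ℝ) - mB| / σY) μ :=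
    ((intB.sub (integrable_const mB)).abs).div_const σY
  have hint_g0 : Integrable (fun ω => g0 (A ω, B ω)) μ := by
    exact ((hint1.add hint2).const_mul c)
  have hg0nonneg : ∀ p, 0 ≤ g0 p := by
    intro p
    apply mul_nonneg hc0.le
    positivity
  have S4 : Summable (fun p => q p * g0 p) :=
    (summable_q_mul μ A B hmA hmB g0 hint_g0).congr fun p => by
      rw [Real.norm_eq_abs, abs_of_nonneg (hg0nonneg p)]
  have htsum_g0 : ∑' p, q p * g0 p = c * ((∫ ω, |(A ω : ℝ) - mA| ∂μ) / σX
      + (∫ ω, |(B ω : ℝ) - mB| ∂μ) / σY) := by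
    rw [tsum_q_eq_integral μ A B hmA hmB g0 hint_g0]
    rw [show (fun ω => g0 (A ω, B ω))
        = fun ω => c * (|(A ω : ℝ) - mA| / σX + |(B ω : ℝ) - mB| / σY) from rfl]
    rw [integral_const_mul]
    congr 1
    rw [integral_add hint1 hint2, integral_div, integral_div]
  set M := ∑' p, q p * gp p with hMdef
  have h1 : |(μ {ω | A ω + X ω = x ∧ B ω + Y ω = y}).toReal - M| ≤ E := by
    rw [hstepA]
    have hsub : ∑' p, q p * rr p - M = ∑' p, (q p * rr p - q p * gp p) :=
      (Summable.tsum_sub S1 S3).symm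
    rw [hsub]
    have habs : Summable (fun p => |q p * rr p - q p * gp p|) := (S1.sub S3).abs
    calc |∑' p, (q p * rr p - q p * gp p)| ≤ ∑' p, |q p * rr p - q p * gp p| := by
          have := norm_tsum_le_tsum_norm
            (f := fun p => q p * rr p - q p * gp p)
            (habs.congr fun p => (Real.norm_eq_abs _).symm)
          simpa [Real.norm_eq_abs] using this
      _ ≤ ∑' p, q p * E := by
          apply Summable.tsum_le_tsum ?_ habs (S2.mul_right E)
          intro p
          rw [← mul_sub, abs_mul, abs_of_nonneg (hq0 p)]
          exact mul_le_mul_of_nonneg_left (hE (x - p.1) (y - p.2)) (hq0 p)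
      _ = E := by rw [tsum_mul_right, hq1, one_mul]
  have h2 : |M - G| ≤ c * ((∫ ω, |(A ω : ℝ) - mA| ∂μ) / σX
      + (∫ ω, |(B ω : ℝ) - mB| ∂μ) / σY) := by
    have hqG : ∑' p, q p * G = G := by rw [tsum_mul_right, hq1, one_mul]
    have hsub : M - G = ∑' p, (q p * gp p - q p * G) := by
      rw [Summable.tsum_sub S3 (S2.mul_right G), hqG]
    rw [hsub]
    have habs : Summable (fun p => |q p * gp p - q p * G|) := (S3.sub (S2.mul_right G)).abs
    calc |∑' p, (q p * gp p - q p * G)| ≤ ∑' p, |q p * gp p - q p * G| := by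
          have := norm_tsum_le_tsum_norm
            (f := fun p => q p * gp p - q p * G)
            (habs.congr fun p => (Real.norm_eq_abs _).symm)
          simpa [Real.norm_eq_abs] using this
      _ ≤ ∑' p, q p * g0 p := by
          apply Summable.tsum_le_tsum ?_ habs S4
          intro p
          rw [← mul_sub, abs_mul, abs_of_nonneg (hq0 p)]
          exact mul_le_mul_of_nonneg_left (gauss2_lip hσX hσY mA mB x y p) (hq0 p)
      _ = _ := htsum_g0
  calc |(μ {ω | A ω + X ω = x ∧ B ω + Y ω = y}).toReal - G|
      ≤ |(μ {ω | A ω + X ω = x ∧ B ω + Y ω = y}).toReal - M| + |M - G| := abs_sub_le _ _ _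
    _ ≤ E + c * ((∫ ω, |(A ω : ℝ) - mA| ∂μ) / σX
        + (∫ ω, |(B ω : ℝ) - mB| ∂μ) / σY) := add_le_add h1 h2


end aux

/-- if `((X_n,Y_n))` satisfies a local limit theorem with parameters
`(μX, μY)` and `(σX², σY²)`, and `(A_n, B_n)` is independent of `(X_n, Y_n)`, with finite
second moments and `Var[A_n] = o(σX²)`, `Var[B_n] = o(σY²)`, then `((A_n+X_n, B_n+Y_n))`
satisfies a local limit theorem with parameters `(E[A_n]+μX, E[B_n]+μY)` and
`(σX², σY²)`. -/
theorem stmt15 {Ω : ℕ → Type*} [∀ n, MeasurableSpace (Ω n)]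
    (μ : ∀ n, Measure (Ω n)) [∀ n, IsProbabilityMeasure (μ n)]
    (X Y A B : ∀ n, Ω n → ℤ)
    (μX μY σX σY : ℕ → ℝ)
    (hσX : ∀ n, 0 < σX n) (hσY : ∀ n, 0 < σY n)
    (hmX : ∀ n, Measurable (X n)) (hmY : ∀ n, Measurable (Y n))
    (hmA : ∀ n, Measurable (A n)) (hmB : ∀ n, Measurable (B n))
    (hLLT : SatisfiesLLT μ X Y μX μY σX σY)
    (hindep : ∀ n, IndepFun (fun ω => (A n ω, B n ω)) (fun ω => (X n ω, Y n ω)) (μ n))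
    (hA2 : ∀ n, Integrable (fun ω => ((A n ω : ℝ)) ^ 2) (μ n))
    (hB2 : ∀ n, Integrable (fun ω => ((B n ω : ℝ)) ^ 2) (μ n))
    (hVarA : (fun n => variance (fun ω => (A n ω : ℝ)) (μ n)) =o[atTop]
      (fun n => (σX n) ^ 2))
    (hVarB : (fun n => variance (fun ω => (B n ω : ℝ)) (μ n)) =o[atTop]
      (fun n => (σY n) ^ 2)) :
    SatisfiesLLT μ (fun n ω => A n ω + X n ω) (fun n ω => B n ω + Y n ω)
      (fun n => (∫ ω, (A n ω : ℝ) ∂(μ n)) + μX n)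
      (fun n => (∫ ω, (B n ω : ℝ) ∂(μ n)) + μY n)
      σX σY := by
  have hπ := Real.pi_pos
  have intA : ∀ n, Integrable (fun ω => ((A n ω : ℝ))) (μ n) := by
    intro n
    refine ((hA2 n).add (integrable_const 1)).mono'
      ((Measurable.comp (measurable_of_countable _) (hmA n)).aestronglyMeasurable) ?_
    filter_upwards with ω
    simp only [Real.norm_eq_abs, Pi.add_apply]
    nlinarith [sq_abs ((A n ω : ℝ)), abs_nonneg ((A n ω : ℝ)),
      sq_nonneg (|(A n ω : ℝ)| - 1)]
  have intB : ∀ n, Integrable (fun ω => ((B n ω : ℝ))) (μ n) := by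
    intro n
    refine ((hB2 n).add (integrable_const 1)).mono'
      ((Measurable.comp (measurable_of_countable _) (hmB n)).aestronglyMeasurable) ?_
    filter_upwards with ω
    simp only [Real.norm_eq_abs, Pi.add_apply]
    nlinarith [sq_abs ((B n ω : ℝ)), abs_nonneg ((B n ω : ℝ)),
      sq_nonneg (|(B n ω : ℝ)| - 1)]
  set Efun : ℕ → ℝ := fun n => ⨆ xy : ℤ × ℤ,
      |(μ n {ω | X n ω = xy.1 ∧ Y n ω = xy.2}).toReal
        - gauss2 (μX n) (μY n) (σX n) (σY n) xy.1 xy.2| with hEdef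
  have hbdd : ∀ n, BddAbove (Set.range fun xy : ℤ × ℤ =>
      |(μ n {ω | X n ω = xy.1 ∧ Y n ω = xy.2}).toReal
        - gauss2 (μX n) (μY n) (σX n) (σY n) xy.1 xy.2|) := by
    intro n
    have hx := hσX n
    have hy := hσY n
    refine ⟨1 + 1 / (2 * Real.pi * σX n * σY n), ?_⟩
    rintro r ⟨xy, rfl⟩
    have h1 : (μ n {ω | X n ω = xy.1 ∧ Y n ω = xy.2}).toReal ≤ 1 := by
      have := ENNReal.toReal_mono (ENNReal.one_ne_top) (prob_le_one
        (μ := μ n) (s := {ω | X n ω = xy.1 ∧ Y n ω = xy.2}))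
      simpa using this
    have h2 := gauss2_bounds (μX := μX n) (μY := μY n) (hσX n) (hσY n) xy.1 xy.2
    calc |(μ n {ω | X n ω = xy.1 ∧ Y n ω = xy.2}).toReal
          - gauss2 (μX n) (μY n) (σX n) (σY n) xy.1 xy.2|
        ≤ |(μ n {ω | X n ω = xy.1 ∧ Y n ω = xy.2}).toReal|
          + |gauss2 (μX n) (μY n) (σX n) (σY n) xy.1 xy.2| := by
          rw [sub_eq_add_neg]
          exact (abs_add_le _ _).trans (by rw [abs_neg])
      _ ≤ 1 + 1 / (2 * Real.pi * σX n * σY n) := by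
          rw [abs_of_nonneg ENNReal.toReal_nonneg, abs_of_nonneg h2.1]
          exact add_le_add h1 h2.2
  have hE : ∀ n (u v : ℤ),
      |(μ n {ω | X n ω = u ∧ Y n ω = v}).toReal
        - gauss2 (μX n) (μY n) (σX n) (σY n) u v| ≤ Efun n :=
    fun n u v => le_ciSup (hbdd n) ((u, v) : ℤ × ℤ)
  set sA : ℕ → ℝ := fun n => Real.sqrt (variance (fun ω => (A n ω : ℝ)) (μ n)) with hsAdef
  set sB : ℕ → ℝ := fun n => Real.sqrt (variance (fun ω => (B n ω : ℝ)) (μ n)) with hsBdef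
  set bound : ℕ → ℝ := fun n => Efun n
      + (1 / (2 * Real.pi * σX n * σY n)) * (sA n / σX n + sB n / σY n) with hbounddef
  have hpt : ∀ n (xy : ℤ × ℤ),
      |(μ n {ω | A n ω + X n ω = xy.1 ∧ B n ω + Y n ω = xy.2}).toReal
        - gauss2 ((∫ ω, (A n ω : ℝ) ∂(μ n)) + μX n) ((∫ ω, (B n ω : ℝ) ∂(μ n)) + μY n)
            (σX n) (σY n) xy.1 xy.2| ≤ bound n := by
    intro n xy
    have hmain := pointwise_bound (μ n) (X n) (Y n) (A n) (B n) (μX n) (μY n)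
      (σX n) (σY n) (hσX n) (hσY n) (hmX n) (hmY n) (hmA n) (hmB n) (hindep n)
      (intA n) (intB n) (Efun n) (fun u v => hE n u v) xy.1 xy.2
    refine hmain.trans ?_
    have hvA := int_abs_sub_le_sqrt_variance (μ n) (A n) (hmA n) (hA2 n)
    have hvB := int_abs_sub_le_sqrt_variance (μ n) (B n) (hmB n) (hB2 n)
    have hx := hσX n
    have hy := hσY n
    have hc0 : (0:ℝ) < 1 / (2 * Real.pi * σX n * σY n) := by positivity
    simp only [hbounddef]
    apply add_le_add (le_refl _)
    apply mul_le_mul_of_nonneg_left ?_ hc0.le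
    exact add_le_add ((div_le_div_iff_of_pos_right (hσX n)).mpr hvA)
      ((div_le_div_iff_of_pos_right (hσY n)).mpr hvB)
  have hEo : Efun =o[atTop] (fun n => 1 / (σX n * σY n)) := hLLT
  have h1t : Tendsto (fun n => sA n / σX n) atTop (nhds 0) := by
    have h0 := hVarA.tendsto_div_nhds_zero
    have h0' := h0.sqrt
    rw [Real.sqrt_zero] at h0'
    refine h0'.congr fun n => ?_
    rw [Real.sqrt_div (variance_nonneg _ _), Real.sqrt_sq (hσX n).le]
  have h2t : Tendsto (fun n => sB n / σY n) atTop (nhds 0) := by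
    have h0 := hVarB.tendsto_div_nhds_zero
    have h0' := h0.sqrt
    rw [Real.sqrt_zero] at h0'
    refine h0'.congr fun n => ?_
    rw [Real.sqrt_div (variance_nonneg _ _), Real.sqrt_sq (hσY n).le]
  have htend : Tendsto (fun n => (1 / (2 * Real.pi)) * (sA n / σX n + sB n / σY n))
      atTop (nhds 0) := by
    simpa using (h1t.add h2t).const_mul (1 / (2 * Real.pi))
  have hTo : (fun n => (1 / (2 * Real.pi * σX n * σY n)) * (sA n / σX n + sB n / σY n))
      =o[atTop] (fun n => 1 / (σX n * σY n)) := by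
    have h := (Asymptotics.isLittleO_one_iff ℝ).mpr htend
    have h2 := h.mul_isBigO (Asymptotics.isBigO_refl (fun n => 1 / (σX n * σY n)) atTop)
    refine h2.congr (fun n => ?_) (fun n => one_mul _)
    rw [one_div, one_div, one_div, mul_inv, mul_inv, mul_inv]
    ring
  have hbo : bound =o[atTop] (fun n => 1 / (σX n * σY n)) := hEo.add hTo
  unfold SatisfiesLLT
  refine Asymptotics.IsBigO.trans_isLittleO ?_ hbo
  apply Asymptotics.isBigO_of_le
  intro n
  rw [Real.norm_eq_abs, Real.norm_eq_abs]
  rw [abs_of_nonneg (Real.iSup_nonneg fun xy => abs_nonneg _)]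
  exact le_trans (ciSup_le fun xy => hpt n xy) (le_abs_self _)
end

section
/- Fix an integer r ≥ 2. For d̄ > r/(r−1), let ξ(d̄) be the unique ξ ∈ (0,1) with Φ_r(ξ) = d̄. Then, as d̄ → ∞: if r ≥ 3, ξ(d̄) = e^{−d̄} + d̄·e^{−2d̄} + O(d̄²·e^{−3d̄}) and F_r(d̄) = e^{−d̄} + ((d̄+1)/2)·e^{−2d̄} + O(d̄²·e^{−3d̄}); if r = 2, ξ(d̄) = e^{−d̄} + 2d̄·e^{−2d̄} + O(d̄²·e^{−3d̄}) and F_2(d̄) = e^{−d̄} + (d̄ + 1/2)·e^{−2d̄} + O(d̄²·e^{−3d̄}). -/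
open Filter Real Asymptotics

/-- `Φ_r(ξ) = log(1/ξ)·(1−ξ^r)/((1−ξ^{r−1})(1−ξ))`. -/
noncomputable def Phi (r : ℕ) (ξ : ℝ) : ℝ :=
  Real.log (1 / ξ) * (1 - ξ ^ r) / ((1 - ξ ^ (r - 1)) * (1 - ξ))

/-- `F_r(d̄)` computed from a branch `xi` of `Φ_r⁻¹`. -/
noncomputable def Fr (r : ℕ) (xi : ℝ → ℝ) (x : ℝ) : ℝ :=
  x * Real.log (1 - xi x) - (x / r) * Real.log (1 - xi x ^ r)
    - (xi x / (1 - xi x)) * Real.log (xi x) - Real.log (1 - xi x)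

lemma tm_le {t : ℝ} (ht0 : 0 < t) (ht1 : t < 1) {m : ℕ} (hm : 1 ≤ m) : t ^ m ≤ t :=
  pow_le_of_le_one ht0.le ht1.le (by omega)

lemma A1 {t : ℝ} (ht0 : 0 < t) (ht1 : t < 1) {m : ℕ} (hm : 1 ≤ m) :
    1 - t ^ (m + 1) ≤ 2 * (1 - t ^ m) := by
  have h1 : t ^ m ≤ t := tm_le ht0 ht1 hm
  have h2 : t ^ (m + 1) = t ^ m * t := pow_succ t m
  nlinarith [sq_nonneg (1 - t), pow_pos ht0 m]

lemma A2 {t : ℝ} (ht0 : 0 < t) (ht1 : t < 1) {m : ℕ} (hm : 1 ≤ m) :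
    (1 - t ^ m) * (1 - t) ≤ 1 - t ^ (m + 1) := by
  have h1 : t ^ m ≤ t := tm_le ht0 ht1 hm
  have h2 : t ^ (m + 1) = t ^ m * t := pow_succ t m
  nlinarith [pow_pos ht0 m]

lemma A3 {r : ℕ} (hr : 2 ≤ r) {t : ℝ} (ht0 : 0 < t) (ht1 : t < 1) : Phi r t ≤ 2 / t := by
  obtain ⟨m, hm, rfl⟩ : ∃ m, 1 ≤ m ∧ r = m + 1 := ⟨r - 1, by omega, by omega⟩
  have hmm : m + 1 - 1 = m := by omega
  have hD : 0 < (1 - t ^ m) * (1 - t) :=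
    mul_pos (by nlinarith [pow_lt_one₀ ht0.le ht1 (by omega : m ≠ 0)]) (by linarith)
  have hlog : t * Real.log (1 / t) ≤ 1 - t := by
    have := Real.log_le_sub_one_of_pos (x := 1 / t) (by positivity)
    calc t * Real.log (1 / t) ≤ t * (1 / t - 1) := by nlinarith
      _ = 1 - t := by field_simp
  have hlogpos : 0 ≤ Real.log (1 / t) := Real.log_nonneg (by rw [le_div_iff₀ ht0]; linarith)
  have hNpos : (0:ℝ) ≤ 1 - t ^ (m+1) := by nlinarith [tm_le ht0 ht1 (by omega : 1 ≤ m + 1)]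
  rw [Phi, hmm, div_le_div_iff₀ hD ht0]
  have key : Real.log (1 / t) * (1 - t ^ (m+1)) * t ≤ (1-t) * (1 - t^(m+1)) := by
    nlinarith
  calc Real.log (1 / t) * (1 - t ^ (m + 1)) * t ≤ (1-t) * (1 - t^(m+1)) := key
    _ ≤ (1-t) * (2 * (1 - t^m)) := by
        have := A1 ht0 ht1 hm
        nlinarith
    _ = 2 * ((1 - t ^ m) * (1 - t)) := by ring

lemma A4 {r : ℕ} (hr : 2 ≤ r) {t x : ℝ} (ht0 : 0 < t) (ht1 : t < 1) (heq : Phi r t = x) :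
    Real.log t = -(x * ((1 - t ^ (r-1)) * (1 - t) / (1 - t ^ r))) := by
  obtain ⟨m, hm, rfl⟩ : ∃ m, 1 ≤ m ∧ r = m + 1 := ⟨r - 1, by omega, by omega⟩
  have hmm : m + 1 - 1 = m := by omega
  have hD : 0 < (1 - t ^ m) * (1 - t) :=
    mul_pos (by nlinarith [pow_lt_one₀ ht0.le ht1 (by omega : m ≠ 0)]) (by linarith)
  have hN : (0:ℝ) < 1 - t ^ (m+1) := by nlinarith [tm_le ht0 ht1 (by omega : 1 ≤ m + 1)]
  rw [Phi, hmm] at heq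
  rw [Real.log_div one_ne_zero (ne_of_gt ht0), Real.log_one] at heq
  field_simp at heq ⊢
  rw [hmm]; rw [div_eq_iff hD.ne'] at heq
  nlinarith [heq]

lemma Bg {m : ℕ} (hm2 : 2 ≤ m) {t : ℝ} (ht0 : 0 < t) (ht : t ≤ 1/2) :
    |(1 - t ^ m) * (1 - t) / (1 - t ^ (m + 1)) - (1 - t)| ≤ 2 * t ^ 2 := by
  have ht1 : t < 1 := by linarith
  have htm1 : t ^ (m+1) ≤ t := tm_le ht0 ht1 (by omega)
  have hN : (1:ℝ)/2 ≤ 1 - t ^ (m+1) := by linarith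
  have hN0 : (0:ℝ) < 1 - t ^ (m+1) := by linarith
  have hid : (1 - t ^ m) * (1 - t) / (1 - t ^ (m + 1)) - (1 - t)
      = -((1 - t)^2 * t ^ m / (1 - t ^ (m+1))) := by
    field_simp
    rw [pow_succ]
    ring
  rw [hid, abs_neg, abs_of_nonneg (by positivity)]
  have htm2 : t ^ m ≤ t ^ 2 := pow_le_pow_of_le_one ht0.le ht1.le hm2
  rw [div_le_iff₀ hN0]
  calc (1-t)^2 * t^m ≤ 1 * t^m :=
        mul_le_mul_of_nonneg_right (by nlinarith) (pow_nonneg ht0.le m)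
    _ ≤ t^2 := by linarith [htm2]
    _ ≤ 2*t^2*(1-t^(m+1)) := by nlinarith [sq_nonneg t]

lemma Bg2 {t : ℝ} (ht0 : 0 < t) (ht : t ≤ 1/2) :
    |(1 - t ^ 1) * (1 - t) / (1 - t ^ 2) - (1 - 2*t)| ≤ 2 * t ^ 2 := by
  have h1 : (0:ℝ) < 1 + t := by linarith
  have h2 : (0:ℝ) < 1 - t := by linarith
  have hN0 : (0:ℝ) < 1 - t ^ 2 := by nlinarith
  have hid : (1 - t ^ 1) * (1 - t) / (1 - t ^ 2) - (1 - 2*t) = 2*t^2/(1+t) := by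
    rw [pow_one]
    field_simp
    ring
  rw [hid, abs_of_nonneg (by positivity), div_le_iff₀ h1]
  nlinarith

lemma Shalf {x : ℝ} (hx : 0 < x) : Real.exp (-(x/2)) ≤ 2/x := by
  have h1 : x/2 ≤ Real.exp (x/2) := by linarith [Real.add_one_le_exp (x/2)]
  have h2 : (Real.exp (x/2))⁻¹ ≤ (x/2)⁻¹ := inv_anti₀ (by positivity) h1
  rw [Real.exp_neg]
  calc (Real.exp (x/2))⁻¹ ≤ (x/2)⁻¹ := h2
    _ = 2/x := by rw [inv_div]

lemma Sx {x : ℝ} (hx : 0 < x) : x * Real.exp (-x) ≤ 4 / x := by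
  have h1 := Real.add_one_le_exp (x/2)
  have h2 : Real.exp (x/2) * Real.exp (-x) = Real.exp (-(x/2)) := by
    rw [← Real.exp_add]; ring_nf
  have h3 := Shalf hx
  have hE := (Real.exp_pos (-x)).le
  calc x * Real.exp (-x) ≤ 2 * Real.exp (x/2) * Real.exp (-x) := by nlinarith
    _ = 2 * Real.exp (-(x/2)) := by rw [mul_assoc, h2]
    _ ≤ 2 * (2/x) := by linarith
    _ = 4 / x := by ring

lemma Sx2 {x : ℝ} (hx : 0 < x) : x^2 * Real.exp (-x) ≤ 32 / x := by
  have h1 := Real.add_one_le_exp (x/4)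
  have he : 0 < Real.exp (x/4) := Real.exp_pos _
  have hx4 : x ≤ 4 * Real.exp (x/4) := by linarith
  have h2 : Real.exp (x/4) * Real.exp (x/4) * Real.exp (-x) = Real.exp (-(x/2)) := by
    rw [← Real.exp_add, ← Real.exp_add]; ring_nf
  have h3 := Shalf hx
  have hE := (Real.exp_pos (-x)).le
  have hsq : x^2 ≤ 16 * (Real.exp (x/4) * Real.exp (x/4)) := by nlinarith
  calc x^2 * Real.exp (-x) ≤ 16 * (Real.exp (x/4) * Real.exp (x/4)) * Real.exp (-x) := by
        exact mul_le_mul_of_nonneg_right hsq hE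
    _ = 16 * Real.exp (-(x/2)) := by rw [mul_assoc, h2]
    _ ≤ 16 * (2/x) := by linarith
    _ = 32 / x := by ring

lemma logbound {s : ℝ} (h0 : 0 ≤ s) (h2 : s ≤ 1/2) : |Real.log (1-s) + s| ≤ 2*s^2 := by
  rcases h0.eq_or_lt with h | h
  · simp [← h]
  · have hlt : |s| < 1 := by rw [abs_of_pos h]; linarith
    have hb := Real.abs_log_sub_add_sum_range_le hlt 1
    simp [Finset.sum_range_succ] at hb
    rw [abs_of_pos h] at hb
    have hd : s^(1+1)/(1-s) ≤ 2*s^2 := by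
      rw [div_le_iff₀ (by linarith)]
      norm_num
      nlinarith [sq_nonneg s]
    calc |Real.log (1-s) + s| = |s + Real.log (1-s)| := by rw [add_comm]
      _ ≤ s^(1+1)/(1-s) := hb
      _ ≤ 2*s^2 := hd

lemma logbound' {s : ℝ} (h0 : 0 ≤ s) (h2 : s ≤ 1/2) : |Real.log (1-s)| ≤ 2*s := by
  have h := logbound h0 h2
  have h1 : |Real.log (1-s)| ≤ |Real.log (1-s) + s| + s := by
    calc |Real.log (1-s)| = |Real.log (1-s) + s + (-s)| := by ring_nf
      _ ≤ |Real.log (1-s) + s| + |(-s)| := abs_add_le _ _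
      _ = |Real.log (1-s) + s| + s := by rw [abs_neg, abs_of_nonneg h0]
  nlinarith [sq_nonneg s]


set_option maxHeartbeats 1000000 in
lemma Qbound {r : ℕ} {c t : ℝ}
    (hc : (3 ≤ r ∧ c = 1) ∨ (r = 2 ∧ c = 2))
    (ht0 : 0 < t) (ht2 : t ≤ 1/2) :
    |(Real.log (1-t) + t*(1-t^(r-1))/(1-t^r) - (1/(r:ℝ))*Real.log (1-t^r)) + c/2*t^2|
      ≤ 5*t^3 := by
  have hr : 2 ≤ r := by rcases hc with ⟨h,_⟩|⟨h,_⟩ <;> omega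
  have ht1 : t < 1 := by linarith
  have htr : t^r ≤ t := tm_le ht0 ht1 (by omega)
  have hN : (1:ℝ)/2 ≤ 1 - t^r := by linarith
  have hN0 : (0:ℝ) < 1 - t^r := by linarith
  have ht3 : (0:ℝ) ≤ t^3 := by positivity
  have hlog1 : |Real.log (1-t) + (t + t^2/2)| ≤ 2*t^3 := by
    have hlt : |t| < 1 := by rw [abs_of_pos ht0]; linarith
    have hb := Real.abs_log_sub_add_sum_range_le hlt 2
    simp [Finset.sum_range_succ] at hb
    rw [abs_of_pos ht0] at hb
    have hd : t^3/(1-t) ≤ 2*t^3 := by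
      rw [div_le_iff₀ (by linarith)]
      nlinarith [mul_nonneg ht3 (by linarith : (0:ℝ) ≤ 1 - 2*t)]
    calc |Real.log (1-t) + (t + t^2/2)|
        = |t + t^2/(1+1) + Real.log (1-t)| := by rw [show Real.log (1-t) + (t + t^2/2)
            = t + t^2/(1+1) + Real.log (1-t) by ring]
      _ ≤ t^3/(1-t) := hb
      _ ≤ 2*t^3 := hd
  have htr0 : 0 ≤ t^r := by positivity
  have htr2 : t^r ≤ 1/2 := by linarith
  rcases hc with ⟨h3, hc'⟩|⟨h2, hc'⟩
  · -- r ≥ 3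
    have hmid : |t*(1-t^(r-1))/(1-t^r) - t| ≤ 2*t^3 := by
      have hpow : t^r = t^(r-1)*t := by rw [← pow_succ]; congr 1; omega
      have hid : t*(1-t^(r-1))/(1-t^r) - t = -(t*t^(r-1)*(1-t)/(1-t^r)) := by
        field_simp [hN0.ne']
        rw [hpow]
        ring
      rw [hid, abs_neg, abs_of_nonneg (div_nonneg
        (mul_nonneg (mul_nonneg ht0.le (pow_nonneg ht0.le _)) (by linarith)) hN0.le)]
      have htm3 : t*t^(r-1) ≤ t^3 := by
        have h := pow_le_pow_of_le_one ht0.le ht1.le (show 3 ≤ r-1+1 by omega)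
        calc t*t^(r-1) = t^(r-1+1) := by rw [pow_succ]; ring
          _ ≤ t^3 := h
      rw [div_le_iff₀ hN0]
      nlinarith [mul_nonneg (mul_nonneg ht0.le (pow_nonneg ht0.le (r-1))) ht0.le,
        mul_nonneg ht3 (by linarith : (0:ℝ) ≤ 1 - 2*t^r),
        mul_nonneg (mul_nonneg ht0.le (pow_nonneg ht0.le (r-1))) (by linarith : (0:ℝ) ≤ t)]
    have hthird : |(1/(r:ℝ))*Real.log (1-t^r)| ≤ t^3 := by
      have hrR : (2:ℝ) ≤ (r:ℝ) := by exact_mod_cast hr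
      rw [abs_mul, abs_of_nonneg (by positivity : (0:ℝ) ≤ 1/(r:ℝ))]
      have hl := logbound' htr0 htr2
      have hr3 : t^r ≤ t^3 := pow_le_pow_of_le_one ht0.le ht1.le (by omega)
      have h1r : (1:ℝ)/(r:ℝ) ≤ 1/2 := by
        rw [div_le_div_iff₀ (by linarith) (by norm_num)]
        linarith
      calc (1/(r:ℝ)) * |Real.log (1-t^r)| ≤ (1/2) * (2*t^r) := by
            apply mul_le_mul h1r hl (abs_nonneg _) (by norm_num)
        _ = t^r := by ring
        _ ≤ t^3 := hr3
    have hsplit : (Real.log (1-t) + t*(1-t^(r-1))/(1-t^r) - (1/(r:ℝ))*Real.log (1-t^r))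
          + c/2*t^2 = (Real.log (1-t) + (t + t^2/2))
        + (t*(1-t^(r-1))/(1-t^r) - t) + (-(1/(r:ℝ)*Real.log (1-t^r))) := by
      rw [hc']; ring
    rw [hsplit]
    calc _ ≤ |Real.log (1-t) + (t + t^2/2)| + |t*(1-t^(r-1))/(1-t^r) - t|
          + |(-(1/(r:ℝ)*Real.log (1-t^r)))| := abs_add_three _ _ _
      _ ≤ 2*t^3 + 2*t^3 + t^3 := by
          rw [abs_neg]
          exact add_le_add (add_le_add hlog1 hmid) hthird
      _ = 5*t^3 := by ring
  · -- r = 2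
    subst h2
    have h1pt : (0:ℝ) < 1 + t := by linarith
    have h12 : (1:ℝ) - t^2 ≠ 0 := by nlinarith
    have hmid : |t*(1-t^(2-1))/(1-t^2) - (t - t^2)| ≤ t^3 := by
      have hid : t*(1-t^(2-1))/(1-t^2) - (t - t^2) = t^3/(1+t) := by
        norm_num
        field_simp
        ring
      rw [hid, abs_of_nonneg (by positivity), div_le_iff₀ h1pt]
      nlinarith [mul_nonneg ht3 ht0.le]
    have hthird : |(1/((2:ℕ):ℝ))*Real.log (1-t^2) + t^2/2| ≤ t^3 := by
      have ht2s : t^2 ≤ 1/2 := by nlinarith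
      have hl := logbound (by positivity : (0:ℝ) ≤ t^2) ht2s
      have hid : (1/((2:ℕ):ℝ))*Real.log (1-t^2) + t^2/2
          = (1/2) * (Real.log (1-t^2) + t^2) := by norm_num; ring
      rw [hid, abs_mul, abs_of_nonneg (by norm_num : (0:ℝ) ≤ (1:ℝ)/2)]
      have h4 : (t^2)^2 ≤ t^3 := by nlinarith [mul_nonneg ht3 (by linarith : (0:ℝ) ≤ 1 - t)]
      calc (1/2) * |Real.log (1-t^2) + t^2| ≤ (1/2)*(2*(t^2)^2) := by linarith
        _ = (t^2)^2 := by ring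
        _ ≤ t^3 := h4
    have hsplit : (Real.log (1-t) + t*(1-t^(2-1))/(1-t^2)
          - (1/((2:ℕ):ℝ))*Real.log (1-t^2)) + c/2*t^2
        = (Real.log (1-t) + (t + t^2/2)) + (t*(1-t^(2-1))/(1-t^2) - (t - t^2))
          + (-((1/((2:ℕ):ℝ))*Real.log (1-t^2) + t^2/2)) := by
      rw [hc']; push_cast; ring
    rw [hsplit]
    calc _ ≤ |Real.log (1-t) + (t + t^2/2)| + |t*(1-t^(2-1))/(1-t^2) - (t - t^2)|
          + |(-((1/((2:ℕ):ℝ))*Real.log (1-t^2) + t^2/2))| := abs_add_three _ _ _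
      _ ≤ 2*t^3 + t^3 + t^3 := by
          rw [abs_neg]
          exact add_le_add (add_le_add hlog1 hmid) hthird
      _ ≤ 5*t^3 := by linarith

set_option maxHeartbeats 1000000 in
lemma keyF {r : ℕ} (hr : 2 ≤ r) {c t x E : ℝ}
    (hc : (3 ≤ r ∧ c = 1) ∨ (r = 2 ∧ c = 2))
    (hx1 : 1 ≤ x) (ht0 : 0 < t) (ht2 : t ≤ 1/2) (hE0 : 0 < E)
    (hlogt : Real.log t = -(x * ((1 - t ^ (r-1)) * (1 - t) / (1 - t ^ r))))
    (ht500 : t ≤ 500 * E) (htE : E ≤ t)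
    (htEdiff : |t - E| ≤ 3000 * (x*E^2))
    (part1 : |t - (E + c*x*E^2)| ≤ 10^7 * (x^2*E^3)) :
    |(x * Real.log (1 - t) - (x / r) * Real.log (1 - t ^ r)
        - (t / (1 - t)) * Real.log t - Real.log (1 - t))
      - (E + (c/2 * x + 1/2) * E ^ 2)| ≤ 10^10 * (x ^ 2 * E ^ 3) := by
  have hx0 : (0:ℝ) < x := by linarith
  have ht1 : t < 1 := by linarith
  have htr : t^r ≤ t := tm_le ht0 ht1 (by omega)
  have hN : (1:ℝ)/2 ≤ 1 - t^r := by linarith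
  have hN0 : (0:ℝ) < 1 - t^r := by linarith
  have hc1 : (1:ℝ) ≤ c := by rcases hc with ⟨_, rfl⟩|⟨_, rfl⟩ <;> norm_num
  have hc2 : c ≤ 2 := by rcases hc with ⟨_, rfl⟩|⟨_, rfl⟩ <;> norm_num
  have hrR : (2:ℝ) ≤ (r:ℝ) := by exact_mod_cast hr
  have hrne : (r:ℝ) ≠ 0 := by positivity
  have h1t : (1:ℝ) - t ≠ 0 := by linarith
  set Q := Real.log (1-t) + t*(1-t^(r-1))/(1-t^r) - (1/(r:ℝ))*Real.log (1-t^r) with hQdef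
  have hQc : |Q + c/2*t^2| ≤ 5*t^3 := Qbound hc ht0 ht2
  have hFid : x * Real.log (1 - t) - (x / r) * Real.log (1 - t ^ r)
      - (t / (1 - t)) * Real.log t - Real.log (1 - t) = x * Q - Real.log (1-t) := by
    rw [hQdef, hlogt]
    field_simp
    ring
  clear_value Q
  clear hlogt
  have hlog1 : |Real.log (1-t) + (t + t^2/2)| ≤ 2*t^3 := by
    have hlt : |t| < 1 := by rw [abs_of_pos ht0]; linarith
    have hb := Real.abs_log_sub_add_sum_range_le hlt 2
    simp [Finset.sum_range_succ] at hb
    rw [abs_of_pos ht0] at hb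
    have hd : t^3/(1-t) ≤ 2*t^3 := by
      rw [div_le_iff₀ (by linarith)]
      nlinarith [mul_nonneg (pow_nonneg ht0.le 3) (by linarith : (0:ℝ) ≤ 1 - 2*t)]
    calc |Real.log (1-t) + (t + t^2/2)|
        = |t + t^2/(1+1) + Real.log (1-t)| := by rw [show Real.log (1-t) + (t + t^2/2)
            = t + t^2/(1+1) + Real.log (1-t) by ring]
      _ ≤ t^3/(1-t) := hb
      _ ≤ 2*t^3 := hd
  rw [hFid]
  have hF1 : |x * Q - Real.log (1-t) - (t + t^2/2 - c/2*(x*t^2))| ≤ 7*(x*t^3) := by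
    have hsplit : x * Q - Real.log (1-t) - (t + t^2/2 - c/2*(x*t^2))
        = x * (Q + c/2*t^2) + (-(Real.log (1-t) + (t + t^2/2))) := by ring
    rw [hsplit]
    calc _ ≤ |x * (Q + c/2*t^2)| + |(-(Real.log (1-t) + (t + t^2/2)))| := abs_add_le _ _
      _ = x * |Q + c/2*t^2| + |Real.log (1-t) + (t + t^2/2)| := by
          rw [abs_neg, abs_mul, abs_of_pos hx0]
      _ ≤ x * (5*t^3) + 2*t^3 := by
          have h := mul_le_mul_of_nonneg_left hQc hx0.le
          linarith
      _ ≤ 7*(x*t^3) := by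
          nlinarith [mul_nonneg (by linarith : (0:ℝ) ≤ x - 1) (pow_nonneg ht0.le 3)]
  have ht3b : t^3 ≤ 125000000*E^3 := by
    nlinarith [pow_le_pow_left₀ ht0.le ht500 3]
  have hxt3 : x*t^3 ≤ 125000000*(x*E^3) := by
    nlinarith [mul_le_mul_of_nonneg_left ht3b hx0.le]
  have ht2E : |t^2 - E^2| ≤ 1600000*(x*E^3) := by
    have hid : t^2 - E^2 = (t+E)*(t-E) := by ring
    rw [hid, abs_mul, abs_of_pos (by linarith : (0:ℝ) < t+E)]
    calc (t+E)*|t-E| ≤ (501*E)*(3000*(x*E^2)) := by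
          apply mul_le_mul (by linarith) htEdiff (abs_nonneg _) (by positivity)
      _ ≤ 1600000*(x*E^3) := by
          nlinarith [mul_nonneg (mul_nonneg hx0.le (pow_nonneg hE0.le 3)) (by norm_num : (0:ℝ) ≤ 97000)]
  have e1 : |x * Q - Real.log (1-t) - (t + t^2/2 - c/2*(x*t^2))| ≤ 10^9*(x^2*E^3) := by
    calc _ ≤ 7*(x*t^3) := hF1
      _ ≤ 7*(125000000*(x*E^3)) := by linarith
      _ ≤ 10^9*(x^2*E^3) := by
          nlinarith [mul_nonneg (mul_nonneg hx0.le (pow_nonneg hE0.le 3))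
            (show (0:ℝ) ≤ 10^9*x - 875000000 by linarith)]
  have e3 : |(1/2)*(t^2 - E^2)| ≤ 800000*(x^2*E^3) := by
    rw [abs_mul, abs_of_nonneg (by norm_num : (0:ℝ) ≤ (1:ℝ)/2)]
    calc (1/2)*|t^2-E^2| ≤ (1/2)*(1600000*(x*E^3)) := by linarith
      _ = 800000*(x*E^3) := by ring
      _ ≤ 800000*(x^2*E^3) := by
          nlinarith [mul_nonneg (mul_nonneg hx0.le (pow_nonneg hE0.le 3))
            (show (0:ℝ) ≤ x - 1 by linarith)]
  have e4 : |(-(c/2*(x*(t^2 - E^2))))| ≤ 1600000*(x^2*E^3) := by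
    rw [abs_neg, abs_mul, abs_of_nonneg (by positivity : (0:ℝ) ≤ c/2), abs_mul,
      abs_of_pos hx0]
    have hd1 : x*|t^2-E^2| ≤ x*(1600000*(x*E^3)) :=
      mul_le_mul_of_nonneg_left ht2E hx0.le
    have hd2 : c/2*(x*|t^2-E^2|) ≤ 1*(x*|t^2-E^2|) :=
      mul_le_mul_of_nonneg_right (by linarith)
        (mul_nonneg hx0.le (abs_nonneg _))
    calc c/2*(x*|t^2-E^2|) ≤ 1*(x*|t^2-E^2|) := hd2
      _ ≤ 1*(x*(1600000*(x*E^3))) := by linarith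
      _ = 1600000*(x^2*E^3) := by ring
  have hsplit : x * Q - Real.log (1-t) - (E + (c/2*x + 1/2)*E^2)
      = (x * Q - Real.log (1-t) - (t + t^2/2 - c/2*(x*t^2)))
        + (t - (E + c*x*E^2)) + ((1/2)*(t^2 - E^2)) + (-(c/2*(x*(t^2 - E^2)))) := by ring
  rw [hsplit]
  calc |(x * Q - Real.log (1-t) - (t + t^2/2 - c/2*(x*t^2)))
        + (t - (E + c*x*E^2)) + ((1/2)*(t^2 - E^2)) + (-(c/2*(x*(t^2 - E^2))))|
      ≤ |(x * Q - Real.log (1-t) - (t + t^2/2 - c/2*(x*t^2)))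
        + (t - (E + c*x*E^2)) + ((1/2)*(t^2 - E^2))| + |(-(c/2*(x*(t^2 - E^2))))| :=
        abs_add_le _ _
    _ ≤ (|x * Q - Real.log (1-t) - (t + t^2/2 - c/2*(x*t^2))|
        + |t - (E + c*x*E^2)| + |(1/2)*(t^2 - E^2)|) + |(-(c/2*(x*(t^2 - E^2))))| := by
        have h := abs_add_three (x * Q - Real.log (1-t) - (t + t^2/2 - c/2*(x*t^2)))
          (t - (E + c*x*E^2)) ((1/2)*(t^2 - E^2))
        linarith
    _ ≤ 10^9*(x^2*E^3) + 10^7*(x^2*E^3) + 800000*(x^2*E^3) + 1600000*(x^2*E^3) := by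
        linarith
    _ ≤ 10^10 * (x^2*E^3) := by
        nlinarith [mul_nonneg (mul_nonneg hx0.le hx0.le) (pow_nonneg hE0.le 3)]

set_option maxHeartbeats 2000000 in
lemma key {r : ℕ} (hr : 2 ≤ r) {c t x : ℝ}
    (hc : (3 ≤ r ∧ c = 1) ∨ (r = 2 ∧ c = 2))
    (hx : (10:ℝ)^6 ≤ x) (ht0 : 0 < t) (ht1 : t < 1) (heq : Phi r t = x) :
    |t - (Real.exp (-x) + c * x * Real.exp (-x) ^ 2)| ≤ 10^7 * (x ^ 2 * Real.exp (-x) ^ 3) ∧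
    |(x * Real.log (1 - t) - (x / r) * Real.log (1 - t ^ r)
        - (t / (1 - t)) * Real.log t - Real.log (1 - t))
      - (Real.exp (-x) + (c/2 * x + 1/2) * Real.exp (-x) ^ 2)|
      ≤ 10^10 * (x ^ 2 * Real.exp (-x) ^ 3) := by
  have hx0 : (0:ℝ) < x := by norm_num at hx ⊢; linarith
  have hx1 : (1:ℝ) ≤ x := by norm_num at hx ⊢; linarith
  set E := Real.exp (-x) with hEdef
  have hE0 : 0 < E := Real.exp_pos _
  have hE1 : E ≤ 1 := Real.exp_le_one_iff.mpr (by linarith)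
  have hc1 : (1:ℝ) ≤ c := by rcases hc with ⟨_, rfl⟩|⟨_, rfl⟩ <;> norm_num
  have hc2 : c ≤ 2 := by rcases hc with ⟨_, rfl⟩|⟨_, rfl⟩ <;> norm_num
  -- t is small
  have htx : x * t ≤ 2 := by
    have h := A3 hr ht0 ht1
    rw [heq, le_div_iff₀ ht0] at h
    linarith
  have ht2 : t ≤ 1/2 := by nlinarith
  have htr : t ^ r ≤ t := tm_le ht0 ht1 (by omega)
  have hN : (1:ℝ)/2 ≤ 1 - t ^ r := by linarith
  have hN0 : (0:ℝ) < 1 - t ^ r := by linarith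
  have htm0 : (0:ℝ) < 1 - t^(r-1) := by
    have : t^(r-1) ≤ t := tm_le ht0 ht1 (by omega)
    linarith
  set g := (1 - t ^ (r-1)) * (1 - t) / (1 - t ^ r) with hgdef
  have hg0 : 0 ≤ g := by
    rw [hgdef]
    exact div_nonneg (mul_nonneg htm0.le (by linarith)) hN0.le
  have hg1 : g ≤ 1 := by
    rw [hgdef, div_le_one hN0]
    obtain ⟨m, hm, hrm⟩ : ∃ m, 1 ≤ m ∧ r = m + 1 := ⟨r-1, by omega, by omega⟩
    have h := A2 ht0 ht1 hm
    rw [hrm]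
    simpa using h
  have hgc : |g - (1 - c*t)| ≤ 2*t^2 := by
    rcases hc with ⟨h3, hc'⟩|⟨h2, hc'⟩
    · obtain ⟨m, hm, hrm⟩ : ∃ m, 2 ≤ m ∧ r = m + 1 := ⟨r-1, by omega, by omega⟩
      have h := Bg hm ht0 ht2
      rw [hgdef, hrm, hc']
      simp only [Nat.add_sub_cancel, one_mul]
      exact h
    · have h := Bg2 ht0 ht2
      rw [hgdef, h2, hc']
      norm_num at h ⊢
      convert h using 3 <;> ring
  have hlogt : Real.log t = -(x*g) := by
    rw [hgdef]; exact A4 hr ht0 ht1 heq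
  have hexp : t = E * Real.exp (x*(1-g)) := by
    rw [hEdef, ← Real.exp_add]
    conv_lhs => rw [← Real.exp_log ht0, hlogt]
    ring_nf
  set w := x*(1-g) with hwdef
  clear_value E g w
  clear heq
  have hw0 : 0 ≤ w := by rw [hwdef]; exact mul_nonneg hx0.le (by linarith)
  have hgl : 1 - g ≤ 3*t := by
    have h := (abs_le.mp hgc).1
    nlinarith [mul_nonneg (by linarith : (0:ℝ) ≤ 2 - c) ht0.le]
  have hw3 : w ≤ 3*(x*t) := by
    have h := mul_le_mul_of_nonneg_left hgl hx0.le
    rw [hwdef]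
    nlinarith
  have hw6 : w ≤ 6 := by linarith
  have hexp6 : Real.exp (6:ℝ) ≤ 500 := by
    have h := Real.exp_one_lt_d9
    have h6 : Real.exp (6:ℝ) = Real.exp 1 ^ (6:ℕ) := by
      rw [← Real.exp_nat_mul]; norm_num
    have h2 : Real.exp 1 ≤ 2.72 := by norm_num at h; linarith
    calc Real.exp (6:ℝ) = Real.exp 1 ^ (6:ℕ) := h6
      _ ≤ 2.72 ^ (6:ℕ) := pow_le_pow_left₀ (Real.exp_pos 1).le h2 6
      _ ≤ 500 := by norm_num
  have ht500 : t ≤ 500 * E := by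
    calc t = E * Real.exp w := hexp
      _ ≤ E * 500 := by
          have : Real.exp w ≤ Real.exp 6 := Real.exp_le_exp.mpr hw6
          nlinarith
      _ = 500 * E := by ring
  have hxE : x * E ≤ 4/x := by rw [hEdef]; exact Sx hx0
  have hxE' : x * E ≤ 1/100000 := by
    have h4 : 4/x ≤ 1/100000 := by
      rw [div_le_div_iff₀ hx0 (by norm_num)]
      linarith
    linarith
  have hxt : x*t ≤ 1/100 := by
    have h := mul_le_mul_of_nonneg_left ht500 hx0.le
    nlinarith [hxE']
  have hw1 : w ≤ 1 := by linarith
  have htE : E ≤ t := by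
    calc E = E * 1 := by ring
      _ ≤ E * Real.exp w := by nlinarith [Real.add_one_le_exp w]
      _ = t := hexp.symm
  -- exp w ≈ 1 + w
  have hew : |Real.exp w - (1+w)| ≤ w^2 := by
    have h := Real.exp_bound (x := w) (by rwa [abs_of_nonneg hw0]) (n := 2) (by norm_num)
    simp [Finset.sum_range_succ, abs_of_nonneg hw0] at h
    nlinarith [sq_nonneg w]
  have hwxE : w ≤ 1500*(x*E) := by nlinarith
  have hA : |t - E*(1+w)| ≤ 2250000 * (x^2*E^3) := by
    have h1 : |t - E*(1+w)| = E * |Real.exp w - (1+w)| := by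
      rw [hexp, ← mul_sub, abs_mul, abs_of_pos hE0]
    rw [h1]
    have h2 : w^2 ≤ 2250000*(x^2*E^2) := by
      nlinarith [mul_le_mul hwxE hwxE hw0 (by positivity : (0:ℝ) ≤ 1500*(x*E))]
    calc E * |Real.exp w - (1+w)| ≤ E * w^2 := mul_le_mul_of_nonneg_left hew hE0.le
      _ ≤ E * (2250000*(x^2*E^2)) := mul_le_mul_of_nonneg_left h2 hE0.le
      _ = 2250000 * (x^2*E^3) := by ring
  have hwc : |w - c*(x*t)| ≤ 2*(x*t^2) := by
    have h1 : w - c*(x*t) = -(x * (g - (1 - c*t))) := by rw [hwdef]; ring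
    rw [h1, abs_neg, abs_mul, abs_of_pos hx0]
    calc x * |g - (1-c*t)| ≤ x * (2*t^2) := mul_le_mul_of_nonneg_left hgc hx0.le
      _ = 2*(x*t^2) := by ring
  have hB : |E*w - c*(x*t)*E| ≤ 1000000 * (x^2*E^3) := by
    have h1 : E*w - c*(x*t)*E = E * (w - c*(x*t)) := by ring
    rw [h1, abs_mul, abs_of_pos hE0]
    have ht2' : t^2 ≤ 250000*E^2 := by
      nlinarith [mul_le_mul ht500 ht500 ht0.le (by positivity : (0:ℝ) ≤ 500*E)]
    have h2 : x*t^2 ≤ 250000*(x*E^2) := by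
      nlinarith [mul_le_mul_of_nonneg_left ht2' hx0.le]
    calc E * |w - c*(x*t)| ≤ E * (2*(x*t^2)) := mul_le_mul_of_nonneg_left hwc hE0.le
      _ ≤ E * (500000*(x*E^2)) := mul_le_mul_of_nonneg_left (by linarith) hE0.le
      _ ≤ 1000000 * (x^2*E^3) := by
          nlinarith [mul_nonneg (mul_nonneg hx0.le (pow_pos hE0 3).le)
            (show (0:ℝ) ≤ 2*x - 1 by linarith)]
  have hxxEE : 2250000*(x^2*E^3) ≤ 1500*(x*E^2) := by
    nlinarith [mul_le_mul_of_nonneg_right hxE' (by positivity : (0:ℝ) ≤ x*E^2)]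
  have htEdiff : |t - E| ≤ 3000 * (x*E^2) := by
    have h1 : |t - E| ≤ |t - E*(1+w)| + E*w := by
      have hh : t - E = (t - E*(1+w)) + E*w := by ring
      calc |t - E| = |(t - E*(1+w)) + E*w| := by rw [hh]
        _ ≤ |t - E*(1+w)| + |E*w| := abs_add_le _ _
        _ = |t - E*(1+w)| + E*w := by rw [abs_of_nonneg (mul_nonneg hE0.le hw0)]
    have h2 : E*w ≤ 1500*(x*E^2) := by
      nlinarith [mul_le_mul_of_nonneg_left hwxE hE0.le]
    linarith
  have hC : |c*(x*t)*E - c*x*E^2| ≤ 6000*(x^2*E^3) := by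
    have h1 : c*(x*t)*E - c*x*E^2 = c*x*E*(t - E) := by ring
    rw [h1, abs_mul, abs_of_nonneg (by positivity : (0:ℝ) ≤ c*x*E)]
    calc c*x*E*|t-E| ≤ c*x*E*(3000*(x*E^2)) :=
          mul_le_mul_of_nonneg_left htEdiff (by positivity)
      _ ≤ 2*x*E*(3000*(x*E^2)) := by
          nlinarith [mul_nonneg (show (0:ℝ) ≤ 2 - c by linarith)
            (by positivity : (0:ℝ) ≤ x*E*(3000*(x*E^2)))]
      _ = 6000*(x^2*E^3) := by ring
  have part1 : |t - (E + c*x*E^2)| ≤ 10^7 * (x^2*E^3) := by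
    have hsplit : t - (E + c*x*E^2)
        = (t - E*(1+w)) + (E*w - c*(x*t)*E) + (c*(x*t)*E - c*x*E^2) := by ring
    rw [hsplit]
    calc |(t - E*(1+w)) + (E*w - c*(x*t)*E) + (c*(x*t)*E - c*x*E^2)|
        ≤ |t - E*(1+w)| + |E*w - c*(x*t)*E| + |c*(x*t)*E - c*x*E^2| := abs_add_three _ _ _
      _ ≤ 2250000*(x^2*E^3) + 1000000*(x^2*E^3) + 6000*(x^2*E^3) := by linarith
      _ ≤ 10^7 * (x^2*E^3) := by nlinarith [pow_pos hx0 2, pow_pos hE0 3]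
  refine ⟨part1, ?_⟩
  rw [hgdef] at hlogt
  exact keyF hr hc hx1 ht0 ht2 hE0 hlogt ht500 htE htEdiff part1

lemma finalO {r : ℕ} (hr : 2 ≤ r) {c : ℝ}
    (hc : (3 ≤ r ∧ c = 1) ∨ (r = 2 ∧ c = 2)) (xi : ℝ → ℝ)
    (hxi : ∀ x : ℝ, (r : ℝ) / (r - 1) < x → xi x ∈ Set.Ioo (0 : ℝ) 1 ∧ Phi r (xi x) = x) :
    ((fun x : ℝ => xi x - (Real.exp (-x) + c * x * Real.exp (-2 * x)))
        =O[atTop] fun x : ℝ => x ^ 2 * Real.exp (-3 * x))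
    ∧ ((fun x : ℝ => Fr r xi x - (Real.exp (-x) + (c/2 * x + 1/2) * Real.exp (-2 * x)))
        =O[atTop] fun x : ℝ => x ^ 2 * Real.exp (-3 * x)) := by
  have h2r : (0:ℝ) < (r:ℝ) - 1 := by
    have h : (2:ℝ) ≤ r := by exact_mod_cast hr
    linarith
  have hbound : ∀ x : ℝ, (10:ℝ)^6 ≤ x → (r:ℝ)/(r-1) < x := by
    intro x hx
    have h : (2:ℝ) ≤ r := by exact_mod_cast hr
    have h2 : (r:ℝ)/(r-1) ≤ 2 := by
      rw [div_le_iff₀ h2r]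
      linarith
    have h6 : (10:ℝ)^6 = 1000000 := by norm_num
    linarith [h6 ▸ hx]
  constructor
  · apply Asymptotics.IsBigO.of_bound (10^10)
    filter_upwards [Filter.eventually_ge_atTop ((10:ℝ)^6)] with x hx
    obtain ⟨⟨ht0, ht1⟩, heq⟩ := hxi x (hbound x hx)
    have hk := (key hr hc hx ht0 ht1 heq).1
    have hE2 : Real.exp (-x)^2 = Real.exp (-2*x) := by
      rw [← Real.exp_nat_mul]; congr 1; push_cast; ring
    have hE3 : Real.exp (-x)^3 = Real.exp (-3*x) := by
      rw [← Real.exp_nat_mul]; congr 1; push_cast; ring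
    rw [Real.norm_eq_abs, Real.norm_eq_abs,
      abs_of_nonneg (by positivity : (0:ℝ) ≤ x^2*Real.exp (-3*x)), ← hE2, ← hE3]
    have hpos : (0:ℝ) ≤ x^2*Real.exp (-x)^3 := by positivity
    calc |xi x - (Real.exp (-x) + c*x*Real.exp (-x)^2)|
        ≤ 10^7*(x^2*Real.exp (-x)^3) := hk
      _ ≤ 10^10*(x^2*Real.exp (-x)^3) := by nlinarith
  · apply Asymptotics.IsBigO.of_bound (10^10)
    filter_upwards [Filter.eventually_ge_atTop ((10:ℝ)^6)] with x hx
    obtain ⟨⟨ht0, ht1⟩, heq⟩ := hxi x (hbound x hx)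
    have hk := (key hr hc hx ht0 ht1 heq).2
    have hE2 : Real.exp (-x)^2 = Real.exp (-2*x) := by
      rw [← Real.exp_nat_mul]; congr 1; push_cast; ring
    have hE3 : Real.exp (-x)^3 = Real.exp (-3*x) := by
      rw [← Real.exp_nat_mul]; congr 1; push_cast; ring
    rw [Real.norm_eq_abs, Real.norm_eq_abs,
      abs_of_nonneg (by positivity : (0:ℝ) ≤ x^2*Real.exp (-3*x)), ← hE2, ← hE3]
    simp only [Fr]
    have hpos : (0:ℝ) ≤ x^2*Real.exp (-x)^3 := by positivity
    calc |(x * Real.log (1 - xi x) - (x / r) * Real.log (1 - xi x ^ r)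
          - (xi x / (1 - xi x)) * Real.log (xi x) - Real.log (1 - xi x))
          - (Real.exp (-x) + (c/2 * x + 1/2) * Real.exp (-x) ^ 2)|
        ≤ 10^10*(x^2*Real.exp (-x)^3) := hk
      _ ≤ 10^10*(x^2*Real.exp (-x)^3) := le_rfl

/-- the asymptotics of `ξ(d̄) = Φ_r⁻¹(d̄)` and `F_r(d̄)` as `d̄ → ∞`:
for `r ≥ 3`, `ξ = e^{−d̄} + d̄e^{−2d̄} + O(d̄²e^{−3d̄})` and
`F_r = e^{−d̄} + ((d̄+1)/2)e^{−2d̄} + O(d̄²e^{−3d̄})`; for `r = 2`,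
`ξ = e^{−d̄} + 2d̄e^{−2d̄} + O(d̄²e^{−3d̄})` and
`F_2 = e^{−d̄} + (d̄+1/2)e^{−2d̄} + O(d̄²e^{−3d̄})`. -/
theorem stmt16 (r : ℕ) (hr : 2 ≤ r) (xi : ℝ → ℝ)
    (hxi : ∀ x : ℝ, (r : ℝ) / (r - 1) < x → xi x ∈ Set.Ioo (0 : ℝ) 1 ∧ Phi r (xi x) = x) :
    (3 ≤ r →
      ((fun x : ℝ => xi x - (Real.exp (-x) + x * Real.exp (-2 * x)))
          =O[atTop] (fun x : ℝ => x ^ 2 * Real.exp (-3 * x))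
        ∧ (fun x : ℝ => Fr r xi x - (Real.exp (-x) + ((x + 1) / 2) * Real.exp (-2 * x)))
          =O[atTop] (fun x : ℝ => x ^ 2 * Real.exp (-3 * x))))
    ∧ (r = 2 →
      ((fun x : ℝ => xi x - (Real.exp (-x) + 2 * x * Real.exp (-2 * x)))
          =O[atTop] (fun x : ℝ => x ^ 2 * Real.exp (-3 * x))
        ∧ (fun x : ℝ => Fr r xi x - (Real.exp (-x) + (x + 1 / 2) * Real.exp (-2 * x)))
          =O[atTop] (fun x : ℝ => x ^ 2 * Real.exp (-3 * x)))) := by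
  constructor
  · intro h3
    obtain ⟨o1, o2⟩ := finalO hr (Or.inl ⟨h3, rfl⟩) xi hxi
    constructor
    · have hfe : (fun x : ℝ => xi x - (Real.exp (-x) + x * Real.exp (-2 * x)))
          = (fun x : ℝ => xi x - (Real.exp (-x) + (1:ℝ) * x * Real.exp (-2 * x))) := by
        funext x; ring
      rw [hfe]; exact o1
    · have hfe : (fun x : ℝ => Fr r xi x - (Real.exp (-x) + ((x + 1) / 2) * Real.exp (-2 * x)))
          = (fun x : ℝ => Fr r xi x
              - (Real.exp (-x) + ((1:ℝ)/2 * x + 1/2) * Real.exp (-2 * x))) := by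
        funext x; ring
      rw [hfe]; exact o2
  · intro h2
    obtain ⟨o1, o2⟩ := finalO hr (Or.inr ⟨h2, rfl⟩) xi hxi
    constructor
    · exact o1
    · have hfe : (fun x : ℝ => Fr r xi x - (Real.exp (-x) + (x + 1 / 2) * Real.exp (-2 * x)))
          = (fun x : ℝ => Fr r xi x
              - (Real.exp (-x) + ((2:ℝ)/2 * x + 1/2) * Real.exp (-2 * x))) := by
        funext x; ring
      rw [hfe]; exact o2
end

section
/- Let d̄ > 2 be real, let ξ ∈ (0,1) satisfy Φ_2(ξ) = d̄, and set x = d̄/2 and y = (1−ξ)/(1+ξ). Assume 1 − x + x·y > 0 and 1 − x + x·y² > 0, and set a(x) = x(x+1)(1−y) + log(1 − x + x·y) − (1/2)·log(1 − x + x·y²). Then: (i) 2·x·y = log((1+y)/(1−y)); (ii) log(2·e^{−x}·y^{1−x}/√(1−y²)) = −F_2(d̄); and (iii) exp(a(x)) = G_2(d̄). -/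
open Real

/-- comparison of the Bender–Canfield–McKay formula with `F_2` and `G_2`.
Here `ξ ∈ (0,1)` satisfies `Φ_2(ξ) = d̄`, `x = d̄/2`, `y = (1−ξ)/(1+ξ)`, and
`a(x) = x(x+1)(1−y) + log(1−x+xy) − (1/2)log(1−x+xy²)`. Then:
(i) `2xy = log((1+y)/(1−y))`;
(ii) `log(2e^{−x}y^{1−x}/√(1−y²)) = −F_2(d̄)`;
(iii) `exp(a(x)) = G_2(d̄) = (a_2(d̄)/√(b_2(d̄)))·e^{g_2(d̄)}`. -/
theorem stmt18 (dbar ξ x y : ℝ) (hd : 2 < dbar)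
    (hξ : ξ ∈ Set.Ioo (0 : ℝ) 1)
    (hPhi : Real.log (1 / ξ) * (1 + ξ) / (1 - ξ) = dbar)
    (hx : x = dbar / 2) (hy : y = (1 - ξ) / (1 + ξ))
    (h1 : 0 < 1 - x + x * y) (h2 : 0 < 1 - x + x * y ^ 2) :
    2 * x * y = Real.log ((1 + y) / (1 - y))
    ∧ Real.log (2 * Real.exp (-x) * y ^ (1 - x) / Real.sqrt (1 - y ^ 2))
        = -(dbar * Real.log (1 - ξ) - (dbar / 2) * Real.log (1 - ξ ^ 2)
            - (ξ / (1 - ξ)) * Real.log ξ - Real.log (1 - ξ))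
    ∧ Real.exp (x * (x + 1) * (1 - y) + Real.log (1 - x + x * y)
          - (1 / 2) * Real.log (1 - x + x * y ^ 2))
        = (1 + ξ - dbar * ξ) / Real.sqrt ((1 + ξ) ^ 2 - 2 * dbar * ξ)
            * Real.exp ((2 * dbar * ξ + dbar ^ 2 * ξ) / (2 * (1 + ξ))) := by
  obtain ⟨hξ0, hξ1⟩ := hξ
  have h1m : (0:ℝ) < 1 - ξ := by linarith
  have h1p : (0:ℝ) < 1 + ξ := by linarith
  have hrel : Real.log ξ * (1 + ξ) = -dbar * (1 - ξ) := by
    rw [one_div, Real.log_inv] at hPhi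
    field_simp at hPhi
    linarith
  have hy0 : 0 < y := by rw [hy]; positivity
  have hy1 : y < 1 := by rw [hy, div_lt_one h1p]; linarith
  refine ⟨?_, ?_, ?_⟩
  · have hq : (1 + y) / (1 - y) = 1 / ξ := by
      rw [hy]; field_simp; ring_nf; exact mul_inv_cancel₀ hξ0.ne'
    rw [hq, one_div, Real.log_inv, hx, hy]
    field_simp
    linarith [hrel]
  · have hy2 : 1 - y ^ 2 = 4 * ξ / (1 + ξ) ^ 2 := by
      rw [hy]; field_simp; ring
    have h1my2 : 0 < 1 - y ^ 2 := by rw [hy2]; positivity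
    rw [Real.log_div (by positivity) (by positivity), Real.log_sqrt h1my2.le,
      Real.log_mul (by positivity) (by positivity),
      Real.log_mul (by norm_num) (Real.exp_ne_zero _),
      Real.log_exp, Real.log_rpow hy0, hy2,
      Real.log_div (by positivity) (by positivity),
      Real.log_mul (by norm_num) hξ0.ne', Real.log_pow,
      show (1 - ξ ^ 2 : ℝ) = (1 - ξ) * (1 + ξ) by ring,
      Real.log_mul h1m.ne' h1p.ne',
      hy, Real.log_div h1m.ne' h1p.ne',
      show (4:ℝ) = 2 ^ 2 by norm_num, Real.log_pow, hx]
    push_cast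
    field_simp
    linear_combination (-1 : ℝ) * hrel
  · have hA : 1 - x + x * y = (1 + ξ - dbar * ξ) / (1 + ξ) := by
      rw [hx, hy]; field_simp; ring
    have hB : 1 - x + x * y ^ 2 = ((1 + ξ) ^ 2 - 2 * dbar * ξ) / (1 + ξ) ^ 2 := by
      rw [hx, hy]; field_simp; ring
    have hb2 : 0 < (1 + ξ) ^ 2 - 2 * dbar * ξ := by
      have := h2; rw [hB] at this
      have := (div_pos_iff.mp this)
      rcases this with ⟨h, _⟩ | ⟨_, h⟩
      · exact h
      · nlinarith [sq_nonneg (1 + ξ)]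
    have ha2 : 0 < 1 + ξ - dbar * ξ := by
      have := h1; rw [hA] at this
      rcases div_pos_iff.mp this with ⟨h, _⟩ | ⟨_, h⟩
      · exact h
      · linarith
    have hE : x * (x + 1) * (1 - y) = (2 * dbar * ξ + dbar ^ 2 * ξ) / (2 * (1 + ξ)) := by
      rw [hx, hy]; field_simp; ring
    have hsB : Real.sqrt (1 - x + x * y ^ 2) = Real.sqrt ((1 + ξ) ^ 2 - 2 * dbar * ξ) / (1 + ξ) := by
      rw [hB, Real.sqrt_div hb2.le, Real.sqrt_sq h1p.le]
    rw [Real.exp_sub, Real.exp_add, Real.exp_log h1,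
      show ((1:ℝ)/2) * Real.log (1 - x + x * y ^ 2) = Real.log (Real.sqrt (1 - x + x * y ^ 2)) by
        rw [Real.log_sqrt h2.le]; ring,
      Real.exp_log (Real.sqrt_pos.mpr h2), hE, hA, hsB]
    have hsb : 0 < Real.sqrt ((1 + ξ) ^ 2 - 2 * dbar * ξ) := Real.sqrt_pos.mpr hb2
    field_simp
end
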